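/- Let ℓ be a prime and m ∈ F_ℓˣ. The set of characteristic polynomials of elements of GSp₄(F_ℓ) with multiplier m is exactly { T⁴ + c₃T³ + c₂T² + m·c₃·T + m² : c₃, c₂ ∈ F_ℓ }. In particular, exactly ℓ² distinct polynomials occur as characteristic polynomials of elements of GSp₄(F_ℓ)^{(m)}. -/

import Mathlib

open Matrix Polynomial

noncomputable section

/-- The standard symplectic form matrix `J = [[0, I₂], [−I₂, 0]]`. -/
def J4 (k : Type*) [CommRing k] : Matrix (Fin 4) (Fin 4) k :=
  !![0,0,1,0; 0,0,0,1; -1,0,0,0; 0,-1,0,0]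

/-- `γ` is a symplectic similitude with multiplier `m`. -/
def InGSp4 {k : Type*} [CommRing k] (m : k) (γ : Matrix (Fin 4) (Fin 4) k) : Prop :=
  IsUnit γ ∧ IsUnit m ∧ γ.transpose * J4 k * γ = m • J4 k

/-- The order of the centralizer of `γ` in `GSp₄`. -/
def centOrder {k : Type*} [CommRing k] (γ : Matrix (Fin 4) (Fin 4) k) : ℕ :=
  Nat.card {δ : Matrix (Fin 4) (Fin 4) k // (∃ m, InGSp4 m δ) ∧ δ * γ = γ * δ}

/-- `γ` is cyclic: its minimal polynomial equals its characteristic polynomial. -/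
def IsCyclicMat {k : Type*} [Field k] (γ : Matrix (Fin 4) (Fin 4) k) : Prop :=
  minpoly k γ = γ.charpoly

section Aux

variable {R : Type*} [CommRing R]

theorem detFin4 (A : Matrix (Fin 4) (Fin 4) R) : det A =
    A 0 0 * A 1 1 * A 2 2 * A 3 3 - A 0 0 * A 1 1 * A 2 3 * A 3 2 - A 0 0 * A 1 2 * A 2 1 * A 3 3 + A 0 0 * A 1 2 * A 2 3 * A 3 1 + A 0 0 * A 1 3 * A 2 1 * A 3 2 - A 0 0 * A 1 3 * A 2 2 * A 3 1 - A 0 1 * A 1 0 * A 2 2 * A 3 3 + A 0 1 * A 1 0 * A 2 3 * A 3 2 + A 0 1 * A 1 2 * A 2 0 * A 3 3 - A 0 1 * A 1 2 * A 2 3 * A 3 0 - A 0 1 * A 1 3 * A 2 0 * A 3 2 + A 0 1 * A 1 3 * A 2 2 * A 3 0 + A 0 2 * A 1 0 * A 2 1 * A 3 3 - A 0 2 * A 1 0 * A 2 3 * A 3 1 - A 0 2 * A 1 1 * A 2 0 * A 3 3 + A 0 2 * A 1 1 * A 2 3 * A 3 0 + A 0 2 * A 1 3 * A 2 0 * A 3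 1 - A 0 2 * A 1 3 * A 2 1 * A 3 0 - A 0 3 * A 1 0 * A 2 1 * A 3 2 + A 0 3 * A 1 0 * A 2 2 * A 3 1 + A 0 3 * A 1 1 * A 2 0 * A 3 2 - A 0 3 * A 1 1 * A 2 2 * A 3 0 - A 0 3 * A 1 2 * A 2 0 * A 3 1 + A 0 3 * A 1 2 * A 2 1 * A 3 0 := by
  rw [det_succ_row_zero]
  have h1 : (Fin.succ 2 : Fin 4) = 3 := rfl
  have h2 : (Fin.castSucc 2 : Fin 4) = 2 := rfl
  simp [Fin.sum_univ_succ, det_fin_three, submatrix_apply, Fin.succAbove]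
  ring

set_option maxHeartbeats 2000000 in
theorem traceAdj4 (A : Matrix (Fin 4) (Fin 4) R) : trace (adjugate A) =
    A 0 0 * A 1 1 * A 2 2 + A 0 0 * A 1 1 * A 3 3 - A 0 0 * A 1 2 * A 2 1 - A 0 0 * A 1 3 * A 3 1 + A 0 0 * A 2 2 * A 3 3 - A 0 0 * A 2 3 * A 3 2 - A 0 1 * A 1 0 * A 2 2 - A 0 1 * A 1 0 * A 3 3 + A 0 1 * A 1 2 * A 2 0 + A 0 1 * A 1 3 * A 3 0 + A 0 2 * A 1 0 * A 2 1 - A 0 2 * A 1 1 * A 2 0 - A 0 2 * A 2 0 * A 3 3 + A 0 2 * A 2 3 * A 3 0 + A 0 3 * A 1 0 * A 3 1 - A 0 3 * A 1 1 * A 3 0 + A 0 3 * A 2 0 * A 3 2 - A 0 3 * A 2 2 * A 3 0 + A 1 1 * A 2 2 * A 3 3 - A 1 1 * A 2 3 * A 3 2 - A 1 2 * A 2 1 * A 3 3 + A 1 2 * A 2 3 * A 3 1 + A 1 3 * A 2 1 * A 3 2 - A 1 3 * A 2 2 * A 3 1 := by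
  rw [trace]
  simp only [diag_apply, Fin.sum_univ_four, adjugate_apply, detFin4]
  simp [updateRow_apply, Pi.single_apply]
  ring

set_option maxHeartbeats 2000000 in
theorem charpoly4 (A : Matrix (Fin 4) (Fin 4) R) : A.charpoly =
    C ((A 0 0 * A 1 1 * A 2 2 * A 3 3 - A 0 0 * A 1 1 * A 2 3 * A 3 2 - A 0 0 * A 1 2 * A 2 1 * A 3 3 + A 0 0 * A 1 2 * A 2 3 * A 3 1 + A 0 0 * A 1 3 * A 2 1 * A 3 2 - A 0 0 * A 1 3 * A 2 2 * A 3 1 - A 0 1 * A 1 0 * A 2 2 * A 3 3 + A 0 1 * A 1 0 * A 2 3 * A 3 2 + A 0 1 * A 1 2 * A 2 0 * A 3 3 - A 0 1 * A 1 2 * A 2 3 * A 3 0 - A 0 1 * A 1 3 * A 2 0 * A 3 2 + A 0 1 * A 1 3 * A 2 2 * A 3 0 + A 0 2 * A 1 0 * A 2 1 * A 3 3 - A 0 2 * A 1 0 * A 2 3 * A 3 1 - A 0 2 * A 1 1 * A 2 0 * A 3 3 + A 0 2 * A 1 1 * A 2 3 * A 3 0 + A 0 2 * A 1 3 * A 2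 0 * A 3 1 - A 0 2 * A 1 3 * A 2 1 * A 3 0 - A 0 3 * A 1 0 * A 2 1 * A 3 2 + A 0 3 * A 1 0 * A 2 2 * A 3 1 + A 0 3 * A 1 1 * A 2 0 * A 3 2 - A 0 3 * A 1 1 * A 2 2 * A 3 0 - A 0 3 * A 1 2 * A 2 0 * A 3 1 + A 0 3 * A 1 2 * A 2 1 * A 3 0)) + C ((-A 0 0 * A 1 1 * A 2 2 - A 0 0 * A 1 1 * A 3 3 + A 0 0 * A 1 2 * A 2 1 + A 0 0 * A 1 3 * A 3 1 - A 0 0 * A 2 2 * A 3 3 + A 0 0 * A 2 3 * A 3 2 + A 0 1 * A 1 0 * A 2 2 + A 0 1 * A 1 0 * A 3 3 - A 0 1 * A 1 2 * A 2 0 - A 0 1 * A 1 3 * A 3 0 - A 0 2 * A 1 0 * A 2 1 + A 0 2 * A 1 1 * A 2 0 + A 0 2 * A 2 0 * A 3 3 - A 0 2 * A 2 3 * A 3 0 - A 0 3 * A 1 0 * A 3 1 + A 0 3 * A 1 1 * A 3 0 - A 0 3 * A 2 0 * A 3 2 + A 0 3 * A 2 2 * A 3 0 - A 1 1 * A 2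 2 * A 3 3 + A 1 1 * A 2 3 * A 3 2 + A 1 2 * A 2 1 * A 3 3 - A 1 2 * A 2 3 * A 3 1 - A 1 3 * A 2 1 * A 3 2 + A 1 3 * A 2 2 * A 3 1)) * X + C ((A 0 0 * A 1 1 + A 0 0 * A 2 2 + A 0 0 * A 3 3 - A 0 1 * A 1 0 - A 0 2 * A 2 0 - A 0 3 * A 3 0 + A 1 1 * A 2 2 + A 1 1 * A 3 3 - A 1 2 * A 2 1 - A 1 3 * A 3 1 + A 2 2 * A 3 3 - A 2 3 * A 3 2)) * X^2 + C ((-A 0 0 - A 1 1 - A 2 2 - A 3 3)) * X^3 + X^4 := by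
  rw [charpoly, detFin4]
  simp [charmatrix_apply, diagonal_apply, C_mul, C_add, C_sub, C_neg]
  ring

set_option maxHeartbeats 1000000 in
theorem coeff_one_charpoly4 (A : Matrix (Fin 4) (Fin 4) R) :
    A.charpoly.coeff 1 = -trace (adjugate A) := by
  rw [charpoly4]
  simp only [coeff_add, coeff_C_mul, coeff_X_pow, coeff_C, coeff_X]
  norm_num
  rw [traceAdj4]
  ring

theorem J4_mul_J4 (k : Type*) [CommRing k] : J4 k * J4 k = -1 := by
  ext i j
  fin_cases i <;> fin_cases j <;>
    simp [J4, Matrix.mul_apply, Fin.sum_univ_four, Matrix.one_apply,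
      Matrix.vecHead, Matrix.vecTail]

/-- the standard matrix with given palindromic characteristic polynomial -/
def gmat (m a β : R) : Matrix (Fin 4) (Fin 4) R :=
  !![0,0,0,-m; 1,0,0,-a; 0,1,-a,-β; 0,0,m,0]

theorem gmat_det (m a β : R) : (gmat m a β).det = m ^ 2 := by
  rw [detFin4]
  simp [gmat]
  ring

theorem gmat_form (m a β : R) :
    (gmat m a β).transpose * J4 R * gmat m a β = m • J4 R := by
  ext i j
  fin_cases i <;> fin_cases j <;>
    (simp [gmat, J4, Matrix.mul_apply, Fin.sum_univ_four, Matrix.transpose_apply,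
      Matrix.vecHead, Matrix.vecTail] <;> ring)

set_option maxHeartbeats 1000000 in
theorem gmat_charpoly (m a β : R) :
    (gmat m a β).charpoly
      = X ^ 4 + C a * X ^ 3 + C (β * m) * X ^ 2 + C (m * a) * X + C (m ^ 2) := by
  rw [charpoly4]
  simp [gmat, C_mul, C_add, C_sub, C_neg, map_pow, Matrix.vecHead, Matrix.vecTail]
  ring

end Aux

theorem stmt11 (ℓ : ℕ) (hℓ : ℓ.Prime) [Fact ℓ.Prime]
    (m : ZMod ℓ) (hm : m ≠ 0) :
    {p : Polynomial (ZMod ℓ) | ∃ γ : Matrix (Fin 4) (Fin 4) (ZMod ℓ),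
        InGSp4 m γ ∧ γ.charpoly = p} =
      {p : Polynomial (ZMod ℓ) | ∃ c₃ c₂ : ZMod ℓ,
        p = X ^ 4 + C c₃ * X ^ 3 + C c₂ * X ^ 2 + C (m * c₃) * X + C (m ^ 2)} ∧
    Nat.card {p : Polynomial (ZMod ℓ) | ∃ γ : Matrix (Fin 4) (Fin 4) (ZMod ℓ),
        InGSp4 m γ ∧ γ.charpoly = p} = ℓ ^ 2 := by
  have hm2 : (m ^ 2 : ZMod ℓ) ≠ 0 := pow_ne_zero _ hm
  have hset : {p : Polynomial (ZMod ℓ) | ∃ γ : Matrix (Fin 4) (Fin 4) (ZMod ℓ),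
        InGSp4 m γ ∧ γ.charpoly = p} =
      {p : Polynomial (ZMod ℓ) | ∃ c₃ c₂ : ZMod ℓ,
        p = X ^ 4 + C c₃ * X ^ 3 + C c₂ * X ^ 2 + C (m * c₃) * X + C (m ^ 2)} := by
    ext p
    constructor
    · rintro ⟨γ, ⟨hU, hmU, h⟩, rfl⟩
      -- the determinant is m², via the Pfaffian
      have hdet : γ.det = m ^ 2 := by
        have hPf : -((γ.transpose * J4 (ZMod ℓ) * γ) 0 1 * (γ.transpose * J4 (ZMod ℓ) * γ) 2 3
            - (γ.transpose * J4 (ZMod ℓ) * γ) 0 2 * (γ.transpose * J4 (ZMod ℓ) * γ) 1 3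
            + (γ.transpose * J4 (ZMod ℓ) * γ) 0 3 * (γ.transpose * J4 (ZMod ℓ) * γ) 1 2)
            = γ.det := by
          rw [detFin4]
          simp [J4, Matrix.mul_apply, Fin.sum_univ_four, Matrix.transpose_apply]
          ring
        rw [h] at hPf
        simp [J4, Matrix.smul_apply] at hPf
        linear_combination -hPf
      have hdetU : IsUnit γ.det := by
        rw [hdet]; exact isUnit_iff_ne_zero.2 hm2
      have hγg : γ * γ⁻¹ = 1 := mul_nonsing_inv γ hdetU
      -- trace relation: tr γ = m tr γ⁻¹
      have h2 : γ.transpose * J4 (ZMod ℓ) = m • (J4 (ZMod ℓ) * γ⁻¹) := by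
        calc γ.transpose * J4 (ZMod ℓ)
            = γ.transpose * J4 (ZMod ℓ) * (γ * γ⁻¹) := by rw [hγg, mul_one]
          _ = (γ.transpose * J4 (ZMod ℓ) * γ) * γ⁻¹ := by
              rw [Matrix.mul_assoc (γ.transpose * J4 (ZMod ℓ)) γ γ⁻¹]
          _ = (m • J4 (ZMod ℓ)) * γ⁻¹ := by rw [h]
          _ = m • (J4 (ZMod ℓ) * γ⁻¹) := by rw [Matrix.smul_mul]
      have htr : trace γ = m * trace γ⁻¹ := by
        have t1 : trace (J4 (ZMod ℓ) * (γ.transpose * J4 (ZMod ℓ))) = -trace γ := by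
          rw [Matrix.trace_mul_comm, Matrix.mul_assoc, J4_mul_J4]
          simp [Matrix.trace_transpose]
        rw [h2] at t1
        rw [Matrix.mul_smul, ← Matrix.mul_assoc, J4_mul_J4, trace_smul] at t1
        simp only [neg_one_mul, trace_neg, smul_eq_mul] at t1
        linear_combination t1
      -- adjugate relation
      have hadj : adjugate γ = m ^ 2 • γ⁻¹ := by
        calc adjugate γ = adjugate γ * (γ * γ⁻¹) := by rw [hγg, mul_one]
          _ = (adjugate γ * γ) * γ⁻¹ := by rw [Matrix.mul_assoc]
          _ = (γ.det • (1 : Matrix (Fin 4) (Fin 4) (ZMod ℓ))) * γ⁻¹ := by rw [adjugate_mul]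
          _ = γ.det • γ⁻¹ := by rw [Matrix.smul_mul, Matrix.one_mul]
          _ = m ^ 2 • γ⁻¹ := by rw [hdet]
      have htradj : trace (adjugate γ) = m * trace γ := by
        rw [hadj, trace_smul, smul_eq_mul, htr]; ring
      -- coefficients
      have hc1 : γ.charpoly.coeff 1 = -(m * trace γ) := by
        rw [coeff_one_charpoly4, htradj]
      have hc3 : γ.charpoly.coeff 3 = -trace γ := by
        have h3 := trace_eq_neg_charpoly_coeff γ
        simp only [Fintype.card_fin] at h3
        norm_num at h3
        linear_combination h3
      have hc0 : γ.charpoly.coeff 0 = m ^ 2 := by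
        have h0 := det_eq_sign_charpoly_coeff γ
        simp only [Fintype.card_fin] at h0
        norm_num at h0
        rw [hdet] at h0
        linear_combination -h0
      have hdeg : γ.charpoly.natDegree = 4 := by
        rw [charpoly_natDegree_eq_dim]; simp
      have hc4 : γ.charpoly.coeff 4 = 1 := by
        have h4 := (charpoly_monic γ).coeff_natDegree
        rwa [hdeg] at h4
      refine ⟨γ.charpoly.coeff 3, γ.charpoly.coeff 2, ?_⟩
      have hexp := γ.charpoly.as_sum_range_C_mul_X_pow
      rw [hdeg] at hexp
      conv_lhs => rw [hexp]
      rw [Finset.sum_range_succ, Finset.sum_range_succ, Finset.sum_range_succ,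
        Finset.sum_range_succ, Finset.sum_range_succ, Finset.sum_range_zero]
      rw [hc0, hc1, hc3, hc4]
      simp only [C_neg, C_mul, C_1]
      ring
    · rintro ⟨c₃, c₂, rfl⟩
      refine ⟨gmat m c₃ (c₂ * m⁻¹), ⟨?_, isUnit_iff_ne_zero.2 hm, gmat_form m c₃ (c₂ * m⁻¹)⟩, ?_⟩
      · rw [Matrix.isUnit_iff_isUnit_det, gmat_det]
        exact isUnit_iff_ne_zero.2 hm2
      · rw [gmat_charpoly]
        have hβ : c₂ * m⁻¹ * m = c₂ := by field_simp
        rw [hβ]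
  refine ⟨hset, ?_⟩
  rw [hset]
  have hrange : {p : Polynomial (ZMod ℓ) | ∃ c₃ c₂ : ZMod ℓ,
        p = X ^ 4 + C c₃ * X ^ 3 + C c₂ * X ^ 2 + C (m * c₃) * X + C (m ^ 2)} =
      Set.range (fun c : ZMod ℓ × ZMod ℓ =>
        X ^ 4 + C c.1 * X ^ 3 + C c.2 * X ^ 2 + C (m * c.1) * X + C (m ^ 2)) := by
    ext p
    constructor
    · rintro ⟨c₃, c₂, rfl⟩; exact ⟨(c₃, c₂), rfl⟩
    · rintro ⟨⟨c₃, c₂⟩, rfl⟩; exact ⟨c₃, c₂, rfl⟩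
  have hinj : Function.Injective (fun c : ZMod ℓ × ZMod ℓ =>
      X ^ 4 + C c.1 * X ^ 3 + C c.2 * X ^ 2 + C (m * c.1) * X + C (m ^ 2)) := by
    rintro ⟨x1, x2⟩ ⟨y1, y2⟩ hxy
    simp only at hxy
    have h3 := congrArg (fun q : Polynomial (ZMod ℓ) => q.coeff 3) hxy
    have h2 := congrArg (fun q : Polynomial (ZMod ℓ) => q.coeff 2) hxy
    simp [coeff_add, coeff_C_mul, coeff_X_pow, coeff_C] at h3 h2
    simp [Prod.ext_iff]
    exact ⟨h3, h2⟩
  rw [hrange, Nat.card_range_of_injective hinj, Nat.card_prod, Nat.card_zmod]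
  ring
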